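/- Let ψ ∈ ℂ⁸ be a unit vector supported on the even-parity computational basis states of three qubits, i.e., its coordinates at indices 1, 2, 4, 7 (binary 001, 010, 100, 111) vanish, so ψ = α'|000⟩ + β'|011⟩ + γ'|110⟩ + δ'|101⟩. Then there exist matchgates U and V such that ψ = (I₂ ⊗ U)·(V ⊗ I₂)·e₀, and likewise there exist matchgates U' and V' such that ψ = (U' ⊗ I₂)·(I₂ ⊗ V')·e₀. (Every even-parity three-qubit state can be generated from |000⟩ by two matchgates, in either order of the bonds.) -/

import Mathlib

open Kronecker

/-- A matchgate: a 4×4 unitary `G(A,B)` built from 2×2 unitaries `A`, `B` with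
`det A = det B`, where `A` acts on the even-parity subspace span{|00⟩,|11⟩} and
`B` on the odd-parity subspace span{|01⟩,|10⟩}. -/
def IsMatchgate (G : Matrix (Fin 4) (Fin 4) ℂ) : Prop :=
  ∃ A B : Matrix (Fin 2) (Fin 2) ℂ,
    A ∈ Matrix.unitaryGroup (Fin 2) ℂ ∧ B ∈ Matrix.unitaryGroup (Fin 2) ℂ ∧
    A.det = B.det ∧
    G = !![A 0 0, 0,     0,     A 0 1;
           0,     B 0 0, B 0 1, 0;
           0,     B 1 0, B 1 1, 0;
           A 1 0, 0,     0,     A 1 1]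

/-- A two-qubit gate applied to qubits (1,2) of three qubits (lexicographic ordering). -/
noncomputable def gate12 (U : Matrix (Fin 4) (Fin 4) ℂ) : Matrix (Fin 8) (Fin 8) ℂ :=
  (Matrix.reindex (finProdFinEquiv.trans (finCongr (by norm_num)))
      (finProdFinEquiv.trans (finCongr (by norm_num))))
    (U ⊗ₖ (1 : Matrix (Fin 2) (Fin 2) ℂ))

/-- A two-qubit gate applied to qubits (2,3) of three qubits (lexicographic ordering). -/
noncomputable def gate23 (U : Matrix (Fin 4) (Fin 4) ℂ) : Matrix (Fin 8) (Fin 8) ℂ :=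
  (Matrix.reindex (finProdFinEquiv.trans (finCongr (by norm_num)))
      (finProdFinEquiv.trans (finCongr (by norm_num))))
    ((1 : Matrix (Fin 2) (Fin 2) ℂ) ⊗ₖ U)

/-- The state |000⟩ of three qubits. -/
def e0 : Fin 8 → ℂ := fun i => if i = 0 then 1 else 0

set_option linter.unreachableTactic false
set_option linter.unusedTactic false

set_option maxHeartbeats 4000000 in
lemma gate12_eq (V : Matrix (Fin 4) (Fin 4) ℂ) : gate12 V =
    !![V 0 0, 0, V 0 1, 0, V 0 2, 0, V 0 3, 0;
       0, V 0 0, 0, V 0 1, 0, V 0 2, 0, V 0 3;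
       V 1 0, 0, V 1 1, 0, V 1 2, 0, V 1 3, 0;
       0, V 1 0, 0, V 1 1, 0, V 1 2, 0, V 1 3;
       V 2 0, 0, V 2 1, 0, V 2 2, 0, V 2 3, 0;
       0, V 2 0, 0, V 2 1, 0, V 2 2, 0, V 2 3;
       V 3 0, 0, V 3 1, 0, V 3 2, 0, V 3 3, 0;
       0, V 3 0, 0, V 3 1, 0, V 3 2, 0, V 3 3] := by
  ext i j
  fin_cases i <;> fin_cases j <;>
    simp [gate12, Matrix.reindex_apply, Matrix.kroneckerMap_apply, finProdFinEquiv,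
      Matrix.one_apply, Fin.ext_iff, Fin.divNat, Fin.modNat] <;>
    first
      | rfl
      | (rw [if_pos (by decide)]; rfl)
      | (rw [if_neg (by decide)])
      | (intro h; exact absurd h (by decide))

set_option maxHeartbeats 4000000 in
lemma gate23_eq (U : Matrix (Fin 4) (Fin 4) ℂ) : gate23 U =
    !![U 0 0, U 0 1, U 0 2, U 0 3, 0, 0, 0, 0;
       U 1 0, U 1 1, U 1 2, U 1 3, 0, 0, 0, 0;
       U 2 0, U 2 1, U 2 2, U 2 3, 0, 0, 0, 0;
       U 3 0, U 3 1, U 3 2, U 3 3, 0, 0, 0, 0;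
       0, 0, 0, 0, U 0 0, U 0 1, U 0 2, U 0 3;
       0, 0, 0, 0, U 1 0, U 1 1, U 1 2, U 1 3;
       0, 0, 0, 0, U 2 0, U 2 1, U 2 2, U 2 3;
       0, 0, 0, 0, U 3 0, U 3 1, U 3 2, U 3 3] := by
  ext i j
  fin_cases i <;> fin_cases j <;>
    simp [gate23, Matrix.reindex_apply, Matrix.kroneckerMap_apply, finProdFinEquiv,
      Matrix.one_apply, Fin.ext_iff, Fin.divNat, Fin.modNat] <;>
    first
      | rfl
      | (rw [if_pos (by decide)]; rfl)
      | (rw [if_neg (by decide)])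
      | (intro h; exact absurd h (by decide))

@[simp] lemma consv_2_1 {α : Type*} (x : α) (u : Fin 1 → α) : Matrix.vecCons x u (1 : Fin 2) = u 0 := rfl
@[simp] lemma consv_3_1 {α : Type*} (x : α) (u : Fin 2 → α) : Matrix.vecCons x u (1 : Fin 3) = u 0 := rfl
@[simp] lemma consv_3_2 {α : Type*} (x : α) (u : Fin 2 → α) : Matrix.vecCons x u (2 : Fin 3) = u 1 := rfl
@[simp] lemma consv_4_1 {α : Type*} (x : α) (u : Fin 3 → α) : Matrix.vecCons x u (1 : Fin 4) = u 0 := rfl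
@[simp] lemma consv_4_2 {α : Type*} (x : α) (u : Fin 3 → α) : Matrix.vecCons x u (2 : Fin 4) = u 1 := rfl
@[simp] lemma consv_4_3 {α : Type*} (x : α) (u : Fin 3 → α) : Matrix.vecCons x u (3 : Fin 4) = u 2 := rfl
@[simp] lemma consv_5_1 {α : Type*} (x : α) (u : Fin 4 → α) : Matrix.vecCons x u (1 : Fin 5) = u 0 := rfl
@[simp] lemma consv_5_2 {α : Type*} (x : α) (u : Fin 4 → α) : Matrix.vecCons x u (2 : Fin 5) = u 1 := rfl
@[simp] lemma consv_5_3 {α : Type*} (x : α) (u : Fin 4 → α) : Matrix.vecCons x u (3 : Fin 5) = u 2 := rfl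
@[simp] lemma consv_5_4 {α : Type*} (x : α) (u : Fin 4 → α) : Matrix.vecCons x u (4 : Fin 5) = u 3 := rfl
@[simp] lemma consv_6_1 {α : Type*} (x : α) (u : Fin 5 → α) : Matrix.vecCons x u (1 : Fin 6) = u 0 := rfl
@[simp] lemma consv_6_2 {α : Type*} (x : α) (u : Fin 5 → α) : Matrix.vecCons x u (2 : Fin 6) = u 1 := rfl
@[simp] lemma consv_6_3 {α : Type*} (x : α) (u : Fin 5 → α) : Matrix.vecCons x u (3 : Fin 6) = u 2 := rfl
@[simp] lemma consv_6_4 {α : Type*} (x : α) (u : Fin 5 → α) : Matrix.vecCons x u (4 : Fin 6) = u 3 := rfl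
@[simp] lemma consv_6_5 {α : Type*} (x : α) (u : Fin 5 → α) : Matrix.vecCons x u (5 : Fin 6) = u 4 := rfl
@[simp] lemma consv_7_1 {α : Type*} (x : α) (u : Fin 6 → α) : Matrix.vecCons x u (1 : Fin 7) = u 0 := rfl
@[simp] lemma consv_7_2 {α : Type*} (x : α) (u : Fin 6 → α) : Matrix.vecCons x u (2 : Fin 7) = u 1 := rfl
@[simp] lemma consv_7_3 {α : Type*} (x : α) (u : Fin 6 → α) : Matrix.vecCons x u (3 : Fin 7) = u 2 := rfl
@[simp] lemma consv_7_4 {α : Type*} (x : α) (u : Fin 6 → α) : Matrix.vecCons x u (4 : Fin 7) = u 3 := rfl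
@[simp] lemma consv_7_5 {α : Type*} (x : α) (u : Fin 6 → α) : Matrix.vecCons x u (5 : Fin 7) = u 4 := rfl
@[simp] lemma consv_7_6 {α : Type*} (x : α) (u : Fin 6 → α) : Matrix.vecCons x u (6 : Fin 7) = u 5 := rfl
@[simp] lemma consv_8_1 {α : Type*} (x : α) (u : Fin 7 → α) : Matrix.vecCons x u (1 : Fin 8) = u 0 := rfl
@[simp] lemma consv_8_2 {α : Type*} (x : α) (u : Fin 7 → α) : Matrix.vecCons x u (2 : Fin 8) = u 1 := rfl
@[simp] lemma consv_8_3 {α : Type*} (x : α) (u : Fin 7 → α) : Matrix.vecCons x u (3 : Fin 8) = u 2 := rfl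
@[simp] lemma consv_8_4 {α : Type*} (x : α) (u : Fin 7 → α) : Matrix.vecCons x u (4 : Fin 8) = u 3 := rfl
@[simp] lemma consv_8_5 {α : Type*} (x : α) (u : Fin 7 → α) : Matrix.vecCons x u (5 : Fin 8) = u 4 := rfl
@[simp] lemma consv_8_6 {α : Type*} (x : α) (u : Fin 7 → α) : Matrix.vecCons x u (6 : Fin 8) = u 5 := rfl
@[simp] lemma consv_8_7 {α : Type*} (x : α) (u : Fin 7 → α) : Matrix.vecCons x u (7 : Fin 8) = u 6 := rfl


set_option maxHeartbeats 4000000 in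
lemma mulvec231 (U V : Matrix (Fin 4) (Fin 4) ℂ) :
    (gate23 U * gate12 V).mulVec e0 =
      ![U 0 0 * V 0 0 + U 0 2 * V 1 0,
        U 1 0 * V 0 0 + U 1 2 * V 1 0,
        U 2 0 * V 0 0 + U 2 2 * V 1 0,
        U 3 0 * V 0 0 + U 3 2 * V 1 0,
        U 0 0 * V 2 0 + U 0 2 * V 3 0,
        U 1 0 * V 2 0 + U 1 2 * V 3 0,
        U 2 0 * V 2 0 + U 2 2 * V 3 0,
        U 3 0 * V 2 0 + U 3 2 * V 3 0] := by
  rw [gate12_eq, gate23_eq]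
  funext i
  fin_cases i <;>
    simp [Matrix.mulVec, dotProduct, e0, Matrix.mul_apply, Fin.sum_univ_succ,
      Matrix.cons_val_zero, Matrix.cons_val_succ, Fin.ext_iff, -Fin.val_eq_zero_iff]

set_option maxHeartbeats 4000000 in
lemma mulvec123 (U V : Matrix (Fin 4) (Fin 4) ℂ) :
    (gate12 U * gate23 V).mulVec e0 =
      ![U 0 0 * V 0 0 + U 0 1 * V 2 0,
        U 0 0 * V 1 0 + U 0 1 * V 3 0,
        U 1 0 * V 0 0 + U 1 1 * V 2 0,
        U 1 0 * V 1 0 + U 1 1 * V 3 0,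
        U 2 0 * V 0 0 + U 2 1 * V 2 0,
        U 2 0 * V 1 0 + U 2 1 * V 3 0,
        U 3 0 * V 0 0 + U 3 1 * V 2 0,
        U 3 0 * V 1 0 + U 3 1 * V 3 0] := by
  rw [gate12_eq, gate23_eq]
  funext i
  fin_cases i <;>
    simp [Matrix.mulVec, dotProduct, e0, Matrix.mul_apply, Fin.sum_univ_succ,
      Matrix.cons_val_zero, Matrix.cons_val_succ, Fin.ext_iff, -Fin.val_eq_zero_iff]

open ComplexConjugate

noncomputable def Rot (x y : ℂ) : Matrix (Fin 2) (Fin 2) ℂ := !![x, -conj y; y, conj x]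

lemma rot_key {x y : ℂ} (h : ‖x‖ ^ 2 + ‖y‖ ^ 2 = 1) :
    x * conj x + y * conj y = 1 := by
  rw [Complex.mul_conj, Complex.mul_conj]
  norm_cast
  rw [Complex.normSq_eq_norm_sq, Complex.normSq_eq_norm_sq]
  exact h

lemma rot_mem {x y : ℂ} (h : ‖x‖ ^ 2 + ‖y‖ ^ 2 = 1) :
    Rot x y ∈ Matrix.unitaryGroup (Fin 2) ℂ := by
  have key := rot_key h
  rw [Matrix.mem_unitaryGroup_iff]
  ext i j
  fin_cases i <;> fin_cases j <;>
    simp [Rot, Matrix.mul_apply, Fin.sum_univ_two, Matrix.one_apply, Matrix.conjTranspose_apply] <;>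
    ring_nf <;>
    linear_combination key

lemma rot_det {x y : ℂ} (h : ‖x‖ ^ 2 + ‖y‖ ^ 2 = 1) : (Rot x y).det = 1 := by
  have key := rot_key h
  rw [Rot, Matrix.det_fin_two_of]
  ring_nf
  linear_combination key


lemma exists_pair (p q : ℂ) :
    ∃ x y : ℂ, ‖x‖ ^ 2 + ‖y‖ ^ 2 = 1 ∧
      (Real.sqrt (‖p‖ ^ 2 + ‖q‖ ^ 2) : ℂ) * x = p ∧
      (Real.sqrt (‖p‖ ^ 2 + ‖q‖ ^ 2) : ℂ) * y = q := by
  have hnn : (0:ℝ) ≤ ‖p‖ ^ 2 + ‖q‖ ^ 2 := by positivity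
  have hs2 : Real.sqrt (‖p‖ ^ 2 + ‖q‖ ^ 2) ^ 2 = ‖p‖ ^ 2 + ‖q‖ ^ 2 := Real.sq_sqrt hnn
  by_cases hs : Real.sqrt (‖p‖ ^ 2 + ‖q‖ ^ 2) = 0
  · have h0 : ‖p‖ ^ 2 + ‖q‖ ^ 2 = 0 := by rw [← hs2, hs]; ring
    have hp : p = 0 := by
      have : ‖p‖ ^ 2 = 0 := by nlinarith [sq_nonneg ‖p‖, sq_nonneg ‖q‖]
      simpa [pow_eq_zero_iff] using this
    have hq : q = 0 := by
      have : ‖q‖ ^ 2 = 0 := by nlinarith [sq_nonneg ‖p‖, sq_nonneg ‖q‖]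
      simpa [pow_eq_zero_iff] using this
    refine ⟨1, 0, by norm_num, ?_, ?_⟩
    · rw [hs, hp]; push_cast; ring
    · rw [hs, hq]; push_cast; ring
  · have hsC : (Real.sqrt (‖p‖ ^ 2 + ‖q‖ ^ 2) : ℂ) ≠ 0 := by exact_mod_cast hs
    refine ⟨p / (Real.sqrt (‖p‖ ^ 2 + ‖q‖ ^ 2) : ℂ),
           q / (Real.sqrt (‖p‖ ^ 2 + ‖q‖ ^ 2) : ℂ), ?_, ?_, ?_⟩
    · have hsn : ‖((Real.sqrt (‖p‖ ^ 2 + ‖q‖ ^ 2) : ℝ) : ℂ)‖ = Real.sqrt (‖p‖ ^ 2 + ‖q‖ ^ 2) := by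
        rw [Complex.norm_real, Real.norm_eq_abs, abs_of_nonneg (Real.sqrt_nonneg _)]
      rw [norm_div, norm_div, hsn, div_pow, div_pow, ← add_div, hs2, div_self]
      intro h; exact hs (by nlinarith [hs2])
    · rw [mul_div_cancel₀ _ hsC]
    · rw [mul_div_cancel₀ _ hsC]


noncomputable def mg (A B : Matrix (Fin 2) (Fin 2) ℂ) : Matrix (Fin 4) (Fin 4) ℂ :=
  !![A 0 0, 0,     0,     A 0 1;
     0,     B 0 0, B 0 1, 0;
     0,     B 1 0, B 1 1, 0;
     A 1 0, 0,     0,     A 1 1]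

lemma mg_isMatchgate {A B : Matrix (Fin 2) (Fin 2) ℂ}
    (hA : A ∈ Matrix.unitaryGroup (Fin 2) ℂ) (hB : B ∈ Matrix.unitaryGroup (Fin 2) ℂ)
    (hd : A.det = B.det) : IsMatchgate (mg A B) :=
  ⟨A, B, hA, hB, hd, rfl⟩


/-- Every even-parity three-qubit unit vector (vanishing coordinates at the
odd-parity indices 1 = 001, 2 = 010, 4 = 100, 7 = 111) can be generated from
|000⟩ by two matchgates, in either order of the two bonds. -/
theorem even_parity_state_two_matchgates (ψ : Fin 8 → ℂ)
    (hnorm : ∑ i, ‖ψ i‖ ^ 2 = 1)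
    (h1 : ψ 1 = 0) (h2 : ψ 2 = 0) (h4 : ψ 4 = 0) (h7 : ψ 7 = 0) :
    (∃ U V : Matrix (Fin 4) (Fin 4) ℂ, IsMatchgate U ∧ IsMatchgate V ∧
      ψ = (gate23 U * gate12 V).mulVec e0) ∧
    (∃ U' V' : Matrix (Fin 4) (Fin 4) ℂ, IsMatchgate U' ∧ IsMatchgate V' ∧
      ψ = (gate12 U' * gate23 V').mulVec e0) := by
  have hsum : ‖ψ 0‖ ^ 2 + ‖ψ 3‖ ^ 2 + ‖ψ 5‖ ^ 2 + ‖ψ 6‖ ^ 2 = 1 := by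
    have h := hnorm
    rw [Fin.sum_univ_eight, h1, h2, h4, h7] at h
    simp only [norm_zero, ne_eq, OfNat.ofNat_ne_zero, not_false_eq_true, zero_pow, add_zero,
      zero_add] at h
    linarith [h]
  constructor
  · obtain ⟨x0, x1, hx, hx0, hx1⟩ := exists_pair (ψ 0) (ψ 3)
    obtain ⟨y0, y1, hy, hy0, hy1⟩ := exists_pair (ψ 5) (ψ 6)
    have hrot : ‖((Real.sqrt (‖ψ 0‖ ^ 2 + ‖ψ 3‖ ^ 2) : ℝ) : ℂ)‖ ^ 2 +
        ‖((Real.sqrt (‖ψ 5‖ ^ 2 + ‖ψ 6‖ ^ 2) : ℝ) : ℂ)‖ ^ 2 = 1 := by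
      rw [Complex.norm_real, Complex.norm_real, Real.norm_eq_abs, Real.norm_eq_abs,
        sq_abs, sq_abs, Real.sq_sqrt (by positivity), Real.sq_sqrt (by positivity)]
      linarith [hsum]
    have hBnorm : ‖(starRingEnd ℂ) y1‖ ^ 2 + ‖-(starRingEnd ℂ) y0‖ ^ 2 = 1 := by
      rw [norm_neg, RCLike.norm_conj, RCLike.norm_conj]; linarith [hy]
    refine ⟨mg (Rot x0 x1) (Rot ((starRingEnd ℂ) y1) (-(starRingEnd ℂ) y0)),
      mg (Rot (Real.sqrt (‖ψ 0‖ ^ 2 + ‖ψ 3‖ ^ 2)) (Real.sqrt (‖ψ 5‖ ^ 2 + ‖ψ 6‖ ^ 2)))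
         (Rot (Real.sqrt (‖ψ 0‖ ^ 2 + ‖ψ 3‖ ^ 2)) (Real.sqrt (‖ψ 5‖ ^ 2 + ‖ψ 6‖ ^ 2))),
      mg_isMatchgate (rot_mem hx) (rot_mem hBnorm)
        (by rw [rot_det hx, rot_det hBnorm]),
      mg_isMatchgate (rot_mem hrot) (rot_mem hrot) rfl, ?_⟩
    rw [mulvec231]
    funext i
    fin_cases i <;>
      simp [mg, Rot, h1, h2, h4, h7, map_neg, Complex.conj_conj] <;>
      first
        | rfl
        | linear_combination hx0
        | linear_combination hx1
        | linear_combination hy0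
        | linear_combination hy1
        | linear_combination -hx0
        | linear_combination -hx1
        | linear_combination -hy0
        | linear_combination -hy1
  · obtain ⟨x0, x1, hx, hx0, hx1⟩ := exists_pair (ψ 0) (ψ 6)
    obtain ⟨y0, y1, hy, hy0, hy1⟩ := exists_pair (ψ 3) (ψ 5)
    have hrot : ‖((Real.sqrt (‖ψ 0‖ ^ 2 + ‖ψ 6‖ ^ 2) : ℝ) : ℂ)‖ ^ 2 +
        ‖((Real.sqrt (‖ψ 3‖ ^ 2 + ‖ψ 5‖ ^ 2) : ℝ) : ℂ)‖ ^ 2 = 1 := by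
      rw [Complex.norm_real, Complex.norm_real, Real.norm_eq_abs, Real.norm_eq_abs,
        sq_abs, sq_abs, Real.sq_sqrt (by positivity), Real.sq_sqrt (by positivity)]
      linarith [hsum]
    refine ⟨mg (Rot x0 x1) (Rot y0 y1),
      mg (Rot (Real.sqrt (‖ψ 0‖ ^ 2 + ‖ψ 6‖ ^ 2)) (Real.sqrt (‖ψ 3‖ ^ 2 + ‖ψ 5‖ ^ 2)))
         (Rot (Real.sqrt (‖ψ 0‖ ^ 2 + ‖ψ 6‖ ^ 2)) (Real.sqrt (‖ψ 3‖ ^ 2 + ‖ψ 5‖ ^ 2))),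
      mg_isMatchgate (rot_mem hx) (rot_mem hy)
        (by rw [rot_det hx, rot_det hy]),
      mg_isMatchgate (rot_mem hrot) (rot_mem hrot) rfl, ?_⟩
    rw [mulvec123]
    funext i
    fin_cases i <;>
      simp [mg, Rot, h1, h2, h4, h7, map_neg, Complex.conj_conj] <;>
      first
        | rfl
        | linear_combination hx0
        | linear_combination hx1
        | linear_combination hy0
        | linear_combination hy1
        | linear_combination -hx0
        | linear_combination -hx1
        | linear_combination -hy0
        | linear_combination -hy1
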